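/- Let 1 ≤ p ≠ q < ∞. Then no bounded operators T ∈ B(ℓᵖ) and S ∈ B(ℓ^q) are equivalent after one-sided extension. -/

import Mathlib

open ContinuousLinearMap
open scoped ENNReal

section
open Filter Finset

namespace NoEaoe

set_option maxHeartbeats 3000000


lemma disj_add {a : ℝ≥0∞} (ht : 0 < a.toReal) (f g : lp (fun _ : ℕ => ℂ) a)
    (h : ∀ i, f i = 0 ∨ g i = 0) :
    ‖f + g‖ ^ a.toReal = ‖f‖ ^ a.toReal + ‖g‖ ^ a.toReal := by
  refine (lp.hasSum_norm ht (f + g)).unique ?_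
  have := (lp.hasSum_norm ht f).add (lp.hasSum_norm ht g)
  refine HasSum.congr_fun this fun i => ?_
  rcases h i with h0 | h0 <;>
    simp [lp.coeFn_add, Pi.add_apply, h0, Real.zero_rpow ht.ne']

lemma tail_small {a : ℝ≥0∞} (ht : 0 < a.toReal) (f : lp (fun _ : ℕ => ℂ) a) {ε : ℝ}
    (hε : 0 < ε) : ∃ M : ℕ, ∀ M' ≥ M,
      ‖f - ∑ i ∈ range M', lp.single a i (f i)‖ ≤ ε := by
  have hsum := (lp.hasSum_norm ht f).tendsto_sum_nat
  have hev : ∀ᶠ M' in atTop, ‖f‖ ^ a.toReal - ε ^ a.toReal < ∑ i ∈ range M', ‖f i‖ ^ a.toReal := by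
    refine hsum.eventually (eventually_gt_nhds ?_)
    have : (0:ℝ) < ε ^ a.toReal := Real.rpow_pos_of_pos hε _
    linarith
  obtain ⟨M, hM⟩ := hev.exists_forall_of_atTop
  refine ⟨M, fun M' hM' => ?_⟩
  have h1 : ‖f - ∑ i ∈ range M', lp.single a i (f i)‖ ^ a.toReal =
      ‖f‖ ^ a.toReal - ∑ i ∈ range M', ‖f i‖ ^ a.toReal := lp.norm_compl_sum_single ht f _
  have h2 : ‖f - ∑ i ∈ range M', lp.single a i (f i)‖ ^ a.toReal ≤ ε ^ a.toReal := by
    have := hM M' hM'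
    linarith
  exact (Real.rpow_le_rpow_iff (lp.norm_nonneg' _) hε.le ht).mp h2

lemma head_small {a : ℝ≥0∞} (ht : 0 < a.toReal) (w : ℕ → lp (fun _ : ℕ => ℂ) a)
    (hw : ∀ i, Tendsto (fun k => w k i) atTop (nhds 0)) (M : ℕ) {ε : ℝ} (hε : 0 < ε) (K : ℕ) :
    ∃ k > K, ‖∑ i ∈ range M, lp.single a i (w k i)‖ ≤ ε := by
  have hterm : ∀ i, Tendsto (fun k => ‖w k i‖ ^ a.toReal) atTop (nhds 0) := by
    intro i
    have h1 : Tendsto (fun k => ‖w k i‖) atTop (nhds 0) := by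
      simpa [Function.comp_def] using (continuous_norm.tendsto (0:ℂ)).comp (hw i)
    have h2 : Tendsto (fun x : ℝ => x ^ a.toReal) (nhds 0) (nhds 0) := by
      have := (Real.continuousAt_rpow_const 0 a.toReal (Or.inr ht.le)).tendsto
      simpa [Real.zero_rpow ht.ne'] using this
    exact h2.comp h1
  have hsum : Tendsto (fun k => ∑ i ∈ range M, ‖w k i‖ ^ a.toReal) atTop (nhds 0) := by
    have := tendsto_finset_sum (range M) (fun i _ => hterm i)
    simpa using this
  have hev : ∀ᶠ k in atTop, ∑ i ∈ range M, ‖w k i‖ ^ a.toReal ≤ ε ^ a.toReal :=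
    hsum.eventually (eventually_le_nhds (Real.rpow_pos_of_pos hε _))
  obtain ⟨k, hk1, hk2⟩ := (hev.and (eventually_gt_atTop K)).exists
  refine ⟨k, hk2, ?_⟩
  have h1 : ‖∑ i ∈ range M, lp.single a i (w k i)‖ ^ a.toReal =
      ∑ i ∈ range M, ‖w k i‖ ^ a.toReal := lp.norm_sum_single ht _ _
  have h2 : ‖∑ i ∈ range M, lp.single a i (w k i)‖ ^ a.toReal ≤ ε ^ a.toReal := by
    rw [h1]; exact hk1
  exact (Real.rpow_le_rpow_iff (lp.norm_nonneg' _) hε.le ht).mp h2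

lemma poly_contra {r s : ℝ} (hr : 0 ≤ r) (hrs : r < s) {c K1 K2 : ℝ} (hc : 0 < c)
    (hK1 : 0 ≤ K1) (hK2 : 0 ≤ K2)
    (h : ∀ N : ℕ, c * (N : ℝ) ^ s ≤ K1 * (N : ℝ) ^ r + K2) : False := by
  have hts : Tendsto (fun N : ℕ => ((N : ℝ)) ^ (s - r)) atTop atTop :=
    (tendsto_rpow_atTop (by linarith)).comp tendsto_natCast_atTop_atTop
  obtain ⟨N, hN1, hNbig⟩ :=
    ((eventually_ge_atTop 1).and (hts.eventually_gt_atTop ((K1 + K2) / c))).exists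
  have hN1' : (1:ℝ) ≤ (N:ℝ) := by exact_mod_cast hN1
  have hN0 : (0:ℝ) < (N:ℝ) := by linarith
  have hNr1 : (1:ℝ) ≤ (N:ℝ) ^ r := Real.one_le_rpow hN1' hr
  have hNr0 : (0:ℝ) < (N:ℝ) ^ r := by linarith
  have hbig : K1 + K2 < c * (N:ℝ) ^ (s - r) := by
    rw [div_lt_iff₀ hc] at hNbig; linarith [hNbig]
  have key : c * (N:ℝ) ^ (s - r) * (N:ℝ) ^ r = c * (N:ℝ) ^ s := by
    rw [mul_assoc, ← Real.rpow_add hN0]; ring_nf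
  have h1 : K1 * (N:ℝ) ^ r + K2 ≤ (K1 + K2) * (N:ℝ) ^ r := by nlinarith
  have h2 : (K1 + K2) * (N:ℝ) ^ r < c * (N:ℝ) ^ s := by
    calc (K1 + K2) * (N:ℝ) ^ r < c * (N:ℝ) ^ (s - r) * (N:ℝ) ^ r :=
          mul_lt_mul_of_pos_right hbig hNr0
      _ = c * (N:ℝ) ^ s := key
  linarith [h N]


lemma no_factor (a b : ℝ≥0∞) [Fact (1 ≤ a)] [Fact (1 ≤ b)] (ha : a < ⊤) (hb : b < ⊤)
    (hab : a ≠ b)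
    (A : lp (fun _ : ℕ => ℂ) a →L[ℂ] lp (fun _ : ℕ => ℂ) b)
    (B : lp (fun _ : ℕ => ℂ) b →L[ℂ] lp (fun _ : ℕ => ℂ) a)
    (hAB : ∀ x, A (B x) = x) : False := by
  have ha1 : (1 : ℝ≥0∞) ≤ a := Fact.out
  have hb1 : (1 : ℝ≥0∞) ≤ b := Fact.out
  have hta1 : 1 ≤ a.toReal := by
    rw [← ENNReal.toReal_one]; exact ENNReal.toReal_mono ha.ne ha1
  have htb1 : 1 ≤ b.toReal := by
    rw [← ENNReal.toReal_one]; exact ENNReal.toReal_mono hb.ne hb1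
  set ta := a.toReal with hta
  set tb := b.toReal with htb
  have hta0 : 0 < ta := lt_of_lt_of_le one_pos hta1
  have htb0 : 0 < tb := lt_of_lt_of_le one_pos htb1
  have htab : ta ≠ tb := by
    intro h
    exact hab ((ENNReal.toReal_eq_toReal_iff' ha.ne hb.ne).mp h)
  have ha0 : a ≠ 0 := (lt_of_lt_of_le one_pos ha1).ne'
  -- the basis vectors and their images
  set e : ℕ → lp (fun _ : ℕ => ℂ) b := fun n => lp.single b n (1 : ℂ) with he_def
  have he : ∀ n, ‖e n‖ = 1 := by
    intro n
    have := lp.norm_single (E := fun _ : ℕ => ℂ) (lt_of_lt_of_le one_pos hb1) n (1 : ℂ)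
    simpa using this
  set u : ℕ → lp (fun _ : ℕ => ℂ) a := fun n => B (e n) with hu_def
  have hu : ∀ n, ‖u n‖ ≤ ‖B‖ := by
    intro n
    calc ‖u n‖ ≤ ‖B‖ * ‖e n‖ := B.le_opNorm _
      _ = ‖B‖ := by rw [he n, mul_one]
  -- diagonal subsequence: coordinates converge
  obtain ⟨x, -, φ, hφ, hconv⟩ :
      ∃ x ∈ Set.univ.pi (fun _ : ℕ => Metric.closedBall (0:ℂ) ‖B‖), ∃ φ : ℕ → ℕ,
        StrictMono φ ∧ Tendsto ((fun n => ((u n : ∀ _ : ℕ, ℂ))) ∘ φ) atTop (nhds x) := by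
    apply (isCompact_univ_pi fun _ => isCompact_closedBall (0:ℂ) ‖B‖).isSeqCompact
    intro n
    rw [Set.mem_univ_pi]
    intro i
    rw [Metric.mem_closedBall, dist_zero_right]
    exact (lp.norm_apply_le_norm ha0 (u n) i).trans (hu n)
  have hxi : ∀ i, Tendsto (fun k => u (φ k) i) atTop (nhds (x i)) := fun i =>
    tendsto_pi_nhds.mp hconv i
  -- the difference sequence
  set w : ℕ → lp (fun _ : ℕ => ℂ) a := fun k => u (φ (2*k+1)) - u (φ (2*k)) with hw_def
  set d : ℕ → lp (fun _ : ℕ => ℂ) b := fun k => e (φ (2*k+1)) - e (φ (2*k)) with hd_def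
  have hBd : ∀ k, B (d k) = w k := by intro k; simp [hd_def, hw_def, map_sub, hu_def]
  have hAw : ∀ k, A (w k) = d k := by intro k; rw [← hBd k, hAB]
  have ht1 : Tendsto (fun k : ℕ => 2*k+1) atTop atTop :=
    tendsto_atTop_mono (fun k => by simp only [id_eq]; omega) tendsto_id
  have ht2 : Tendsto (fun k : ℕ => 2*k) atTop atTop :=
    tendsto_atTop_mono (fun k => by simp only [id_eq]; omega) tendsto_id
  have hw0 : ∀ i, Tendsto (fun k => w k i) atTop (nhds 0) := by
    intro i
    have h1 : Tendsto (fun k => u (φ (2*k+1)) i) atTop (nhds (x i)) := (hxi i).comp ht1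
    have h2 : Tendsto (fun k => u (φ (2*k)) i) atTop (nhds (x i)) := (hxi i).comp ht2
    have := h1.sub h2
    rw [sub_self] at this
    refine this.congr fun k => ?_
    simp [hw_def, lp.coeFn_sub, Pi.sub_apply]
  have hwnorm : ∀ k, ‖w k‖ ≤ 2 * ‖B‖ := by
    intro k
    calc ‖w k‖ ≤ ‖u (φ (2*k+1))‖ + ‖u (φ (2*k))‖ := norm_sub_le _ _
      _ ≤ 2 * ‖B‖ := by have := hu (φ (2*k+1)); have := hu (φ (2*k)); linarith
  -- norm of d k
  have hdsum : ∀ (k : ℕ) (c : ℕ → ℂ), ‖c (φ (2*k+1))‖ = 1 → ‖c (φ (2*k))‖ = 1 → True := fun _ _ _ _ => trivial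
  have hφne : ∀ k, φ (2*k) ≠ φ (2*k+1) := fun k => fun h => by
    have := hφ.injective h; omega
  have hd2 : ∀ k, ‖d k‖ ^ tb = 2 := by
    intro k
    set f : ℕ → ℂ := fun i => if i = φ (2*k) then (-1 : ℂ) else 1 with hf_def
    have hsum : ∑ i ∈ ({φ (2*k+1), φ (2*k)} : Finset ℕ), lp.single b i (f i) = d k := by
      rw [Finset.sum_pair (Ne.symm (hφne k))]
      have h1 : f (φ (2*k+1)) = 1 := if_neg (Ne.symm (hφne k))
      have h2 : f (φ (2*k)) = -1 := if_pos rfl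
      rw [h1, h2]
      have hneg : lp.single b (φ (2*k)) ((-1 : ℂ)) = - e (φ (2*k)) := by
        rw [show (-1 : ℂ) = -(1:ℂ) from rfl, lp.single_neg]
      rw [hneg]
      show _ = e (φ (2*k+1)) - e (φ (2*k))
      rw [sub_eq_add_neg]
    have hnorm := lp.norm_sum_single htb0 f ({φ (2*k+1), φ (2*k)} : Finset ℕ)
    rw [hsum] at hnorm
    rw [hnorm, Finset.sum_pair (Ne.symm (hφne k))]
    have h1 : f (φ (2*k+1)) = 1 := if_neg (Ne.symm (hφne k))
    have h2 : f (φ (2*k)) = -1 := if_pos rfl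
    rw [h1, h2]
    simp [Real.one_rpow]
    norm_num
  have hd1 : ∀ k, ‖d k‖ = 2 ^ tb⁻¹ := by
    intro k
    have : ‖d k‖ = (‖d k‖ ^ tb) ^ tb⁻¹ := (Real.rpow_rpow_inv (lp.norm_nonneg' _) htb0.ne').symm
    rw [this, hd2 k]
  -- lower bound on ‖w k‖
  have h2pos : (0:ℝ) < 2 ^ tb⁻¹ := Real.rpow_pos_of_pos two_pos _
  have hdw : ∀ k, 2 ^ tb⁻¹ ≤ ‖A‖ * ‖w k‖ := by
    intro k
    calc (2:ℝ) ^ tb⁻¹ = ‖d k‖ := (hd1 k).symm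
      _ = ‖A (w k)‖ := by rw [hAw]
      _ ≤ ‖A‖ * ‖w k‖ := A.le_opNorm _
  have hA0 : 0 < ‖A‖ := by
    rcases (norm_nonneg A).lt_or_eq with h | h
    · exact h
    · exfalso
      have := hdw 0
      rw [← h, zero_mul] at this
      linarith
  set c0 : ℝ := 2 ^ tb⁻¹ / ‖A‖ with hc0_def
  have hc0 : 0 < c0 := div_pos h2pos hA0
  have hwl : ∀ k, c0 ≤ ‖w k‖ := by
    intro k
    rw [hc0_def, div_le_iff₀ hA0]
    linarith [hdw k]
  -- error budget
  set ε : ℝ := min 1 (c0/2) with hε_def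
  have hε0 : 0 < ε := lt_min one_pos (by linarith)
  have hε1 : ε ≤ 1 := min_le_left _ _
  have hεc : ε ≤ c0/2 := min_le_right _ _
  set δ : ℕ → ℝ := fun j => ε * (1/2)^(j+1) with hδ_def
  have hδ0 : ∀ j, 0 < δ j := fun j => mul_pos hε0 (by positivity)
  have hδε : ∀ j, δ j ≤ ε := by
    intro j
    have h1 : ((1:ℝ)/2)^(j+1) ≤ 1 := pow_le_one₀ (by norm_num) (by norm_num)
    calc δ j = ε * (1/2)^(j+1) := rfl
      _ ≤ ε * 1 := by nlinarith
      _ = ε := mul_one ε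
  -- the recursion
  have step : ∀ (j K M : ℕ), ∃ s : ℕ × ℕ, K < s.1 ∧ M ≤ s.2 ∧
      ‖∑ i ∈ range M, lp.single a i (w s.1 i)‖ ≤ δ j / 2 ∧
      ‖w s.1 - ∑ i ∈ range s.2, lp.single a i (w s.1 i)‖ ≤ δ j / 2 := by
    intro j K M
    obtain ⟨kk, hkk, hhead⟩ := head_small hta0 w hw0 M (half_pos (hδ0 j)) K
    obtain ⟨M0, hM0⟩ := tail_small hta0 (w kk) (half_pos (hδ0 j))
    exact ⟨(kk, max M M0), hkk, le_max_left _ _, hhead, hM0 _ (le_max_right _ _)⟩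
  obtain ⟨G, hG0, hGs⟩ : ∃ G : ℕ → ℕ × ℕ,
      G 0 = Classical.choose (step 0 0 0) ∧
      ∀ j, G (j+1) = Classical.choose (step (j+1) (G j).1 (G j).2) :=
    ⟨fun j => Nat.rec (Classical.choose (step 0 0 0))
      (fun j' ih => Classical.choose (step (j'+1) ih.1 ih.2)) j, rfl, fun j => rfl⟩
  set k : ℕ → ℕ := fun j => (G j).1 with hk_def
  set m : ℕ → ℕ := fun j => Nat.casesOn j 0 (fun j' => (G j').2) with hm_def
  have hspec0 := Classical.choose_spec (step 0 0 0)
  rw [← hG0] at hspec0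
  have hspecS : ∀ j, k j < k (j+1) ∧ m (j+1) ≤ m (j+2) ∧
      ‖∑ i ∈ range (m (j+1)), lp.single a i (w (k (j+1)) i)‖ ≤ δ (j+1) / 2 ∧
      ‖w (k (j+1)) - ∑ i ∈ range (m (j+2)), lp.single a i (w (k (j+1)) i)‖ ≤ δ (j+1) / 2 := by
    intro j
    have h := Classical.choose_spec (step (j+1) (G j).1 (G j).2)
    rw [← hGs j] at h
    exact h
  have hk_mono : StrictMono k := strictMono_nat_of_lt_succ fun j => (hspecS j).1
  have hhead : ∀ j, ‖∑ i ∈ range (m j), lp.single a i (w (k j) i)‖ ≤ δ j / 2 := by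
    intro j
    cases j with
    | zero => exact hspec0.2.2.1
    | succ j' => exact (hspecS j').2.2.1
  have htail : ∀ j, ‖w (k j) - ∑ i ∈ range (m (j+1)), lp.single a i (w (k j) i)‖ ≤ δ j / 2 := by
    intro j
    cases j with
    | zero => exact hspec0.2.2.2
    | succ j' => exact (hspecS j').2.2.2
  have hm_le : ∀ j, m j ≤ m (j+1) := by
    intro j
    cases j with
    | zero => exact Nat.zero_le _
    | succ j' => exact (hspecS j').2.1
  have hm_mono : Monotone m := monotone_nat_of_le_succ hm_le
  -- the blocks
  set v : ℕ → lp (fun _ : ℕ => ℂ) a :=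
    fun j => ∑ i ∈ Finset.Ico (m j) (m (j+1)), lp.single a i (w (k j) i) with hv_def
  have hv_rpow : ∀ j, ‖v j‖ ^ ta = ∑ i ∈ Finset.Ico (m j) (m (j+1)), ‖w (k j) i‖ ^ ta :=
    fun j => lp.norm_sum_single hta0 _ _
  have hsplit : ∀ j, (∑ i ∈ range (m (j+1)), lp.single a i (w (k j) i)) =
      (∑ i ∈ range (m j), lp.single a i (w (k j) i)) + v j :=
    fun j => (Finset.sum_range_add_sum_Ico _ (hm_le j)).symm
  have hv_err : ∀ j, ‖w (k j) - v j‖ ≤ δ j := by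
    intro j
    have heq : w (k j) - v j = (w (k j) - ∑ i ∈ range (m (j+1)), lp.single a i (w (k j) i))
        + ∑ i ∈ range (m j), lp.single a i (w (k j) i) := by
      rw [hsplit j]; abel
    rw [heq]
    calc ‖_ + _‖ ≤ _ + _ := norm_add_le _ _
      _ ≤ δ j / 2 + δ j / 2 := add_le_add (htail j) (hhead j)
      _ = δ j := by ring
  have hv_le_w : ∀ j, ‖v j‖ ≤ ‖w (k j)‖ := by
    intro j
    have h1 : ‖v j‖ ^ ta ≤ ‖w (k j)‖ ^ ta := by
      rw [hv_rpow j]; exact lp.sum_rpow_le_norm_rpow hta0 (w (k j)) _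
    exact (Real.rpow_le_rpow_iff (lp.norm_nonneg' _) (lp.norm_nonneg' _) hta0).mp h1
  have hv_up : ∀ j, ‖v j‖ ≤ 2 * ‖B‖ := fun j => (hv_le_w j).trans (hwnorm _)
  have hv_low : ∀ j, c0 / 2 ≤ ‖v j‖ := by
    intro j
    have h1 : ‖w (k j)‖ - ‖v j‖ ≤ ‖w (k j) - v j‖ := norm_sub_norm_le _ _
    have h2 : δ j ≤ c0 / 2 := le_trans (hδε j) hεc
    have h3 := hwl (k j)
    linarith [hv_err j]
  have hv_supp : ∀ j i, ¬ (m j ≤ i ∧ i < m (j+1)) → (v j) i = 0 := by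
    intro j i hc
    have hvi : (v j) i = ∑ l ∈ Finset.Ico (m j) (m (j+1)),
        (lp.single a l (w (k j) l) : lp (fun _ : ℕ => ℂ) a) i := by
      rw [hv_def, lp.coeFn_sum, Finset.sum_apply]
    rw [hvi]
    refine Finset.sum_eq_zero fun l hl => ?_
    refine lp.single_apply_ne a l _ ?_
    rw [Finset.mem_Ico] at hl
    intro h
    subst h
    exact hc hl
  have hv_supp' : ∀ j i, (v j) i ≠ 0 → m j ≤ i ∧ i < m (j+1) := by
    intro j i h
    by_contra hc
    exact h (hv_supp j i hc)
  -- block norm additivity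
  have hV : ∀ N, ‖∑ j ∈ range N, v j‖ ^ ta = ∑ j ∈ range N, ‖v j‖ ^ ta := by
    intro N
    induction N with
    | zero => simp [Real.zero_rpow hta0.ne']
    | succ N ih =>
      rw [Finset.sum_range_succ, Finset.sum_range_succ, ← ih]
      refine disj_add hta0 _ _ fun i => ?_
      by_cases hi : (v N) i = 0
      · right; exact hi
      · left
        have hiN := (hv_supp' N i hi).1
        have hcoe : (∑ j ∈ range N, v j) i = ∑ j ∈ range N, (v j) i := by
          rw [lp.coeFn_sum, Finset.sum_apply]
        rw [hcoe]
        refine Finset.sum_eq_zero fun j hj => ?_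
        refine hv_supp j i ?_
        rw [Finset.mem_range] at hj
        rintro ⟨-, h2⟩
        have hmle : m (j+1) ≤ m N := hm_mono (show j+1 ≤ N from hj)
        omega
  -- d-sum norm
  have hd_supp : ∀ (kk : ℕ) i, i ≠ φ (2*kk) → i ≠ φ (2*kk+1) → (d kk) i = 0 := by
    intro kk i h1 h2
    have heq : (d kk) i = (e (φ (2*kk+1))) i - (e (φ (2*kk))) i := by
      rw [hd_def]; simp [lp.coeFn_sub, Pi.sub_apply]
    rw [heq, he_def]
    simp [lp.single_apply_ne _ _ _ h1, lp.single_apply_ne _ _ _ h2, Pi.single_apply, h1, h2]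
  have hd_supp' : ∀ (kk : ℕ) i, (d kk) i ≠ 0 → i = φ (2*kk) ∨ i = φ (2*kk+1) := by
    intro kk i h
    by_contra hc
    push_neg at hc
    exact h (hd_supp kk i hc.1 hc.2)
  have hD : ∀ N, ‖∑ j ∈ range N, d (k j)‖ ^ tb = 2 * N := by
    intro N
    induction N with
    | zero => simp [Real.zero_rpow htb0.ne']
    | succ N ih =>
      rw [Finset.sum_range_succ]
      have hdisj : ∀ i, (∑ j ∈ range N, d (k j)) i = 0 ∨ (d (k N)) i = 0 := by
        intro i
        by_cases hi : (d (k N)) i = 0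
        · right; exact hi
        · left
          have hiN := hd_supp' (k N) i hi
          have hcoe : (∑ j ∈ range N, d (k j)) i = ∑ j ∈ range N, (d (k j)) i := by
            rw [lp.coeFn_sum, Finset.sum_apply]
          rw [hcoe]
          refine Finset.sum_eq_zero fun j hj => ?_
          rw [Finset.mem_range] at hj
          have hkj : k j < k N := hk_mono hj
          refine hd_supp (k j) i ?_ ?_ <;>
          · rintro rfl
            rcases hiN with h | h <;>
            · have := hφ.injective h
              omega
      rw [disj_add htb0 _ _ hdisj, ih, hd2 (k N)]
      push_cast
      ring
  -- assembling
  set W : ℕ → lp (fun _ : ℕ => ℂ) a := fun N => ∑ j ∈ range N, w (k j) with hW_def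
  set D : ℕ → lp (fun _ : ℕ => ℂ) b := fun N => ∑ j ∈ range N, d (k j) with hD_def
  have hWB : ∀ N, W N = B (D N) := by
    intro N
    rw [hW_def, hD_def]
    simp only [map_sum]
    exact Finset.sum_congr rfl fun j _ => (hBd (k j)).symm
  have hDA : ∀ N, A (W N) = D N := by
    intro N
    rw [hW_def, hD_def]
    simp only [map_sum]
    exact Finset.sum_congr rfl fun j _ => hAw (k j)
  have hDnorm : ∀ N, ‖D N‖ = (2 * (N:ℝ)) ^ tb⁻¹ := by
    intro N
    rw [← Real.rpow_rpow_inv (lp.norm_nonneg' (D N)) htb0.ne', hD N]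
  have hWV : ∀ N, ‖W N - ∑ j ∈ range N, v j‖ ≤ 1 := by
    intro N
    have heq : W N - ∑ j ∈ range N, v j = ∑ j ∈ range N, (w (k j) - v j) := by
      rw [hW_def, Finset.sum_sub_distrib]
    rw [heq]
    have hg := sum_geometric_two_le N
    calc ‖∑ j ∈ range N, (w (k j) - v j)‖ ≤ ∑ j ∈ range N, ‖w (k j) - v j‖ := norm_sum_le _ _
      _ ≤ ∑ j ∈ range N, δ j := Finset.sum_le_sum fun j _ => hv_err j
      _ = (ε/2) * ∑ j ∈ range N, (1/2:ℝ)^j := by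
          rw [Finset.mul_sum]
          exact Finset.sum_congr rfl fun j _ => by rw [hδ_def]; ring
      _ ≤ 1 := by nlinarith
  have hVnorm_up : ∀ N : ℕ, ‖∑ j ∈ range N, v j‖ ≤ 2*‖B‖ * (N:ℝ) ^ ta⁻¹ := by
    intro N
    have hsum : ∑ j ∈ range N, ‖v j‖ ^ ta ≤ (N:ℝ) * (2*‖B‖)^ta := by
      calc ∑ j ∈ range N, ‖v j‖ ^ ta ≤ ∑ _j ∈ range N, (2*‖B‖)^ta :=
            Finset.sum_le_sum fun j _ => Real.rpow_le_rpow (lp.norm_nonneg' _) (hv_up j) hta0.le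
        _ = (N:ℝ) * (2*‖B‖)^ta := by rw [Finset.sum_const, Finset.card_range, nsmul_eq_mul]
    have h1 : ‖∑ j ∈ range N, v j‖ ^ ta ≤ (N:ℝ) * (2*‖B‖)^ta := by rw [hV N]; exact hsum
    have h2 : ‖∑ j ∈ range N, v j‖ = (‖∑ j ∈ range N, v j‖ ^ ta) ^ ta⁻¹ :=
      (Real.rpow_rpow_inv (lp.norm_nonneg' _) hta0.ne').symm
    rw [h2]
    calc (‖∑ j ∈ range N, v j‖ ^ ta) ^ ta⁻¹ ≤ ((N:ℝ) * (2*‖B‖)^ta) ^ ta⁻¹ :=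
          Real.rpow_le_rpow (by positivity) h1 (by positivity)
      _ = (N:ℝ)^ta⁻¹ * (2*‖B‖) := by
          rw [Real.mul_rpow (Nat.cast_nonneg N) (by positivity),
            Real.rpow_rpow_inv (by positivity) hta0.ne']
      _ = 2*‖B‖ * (N:ℝ) ^ ta⁻¹ := by ring
  have hVnorm_low : ∀ N : ℕ, (c0/2) * (N:ℝ) ^ ta⁻¹ ≤ ‖∑ j ∈ range N, v j‖ := by
    intro N
    have hsum : (N:ℝ) * (c0/2)^ta ≤ ∑ j ∈ range N, ‖v j‖ ^ ta := by
      calc (N:ℝ) * (c0/2)^ta = ∑ _j ∈ range N, (c0/2:ℝ)^ta := by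
            rw [Finset.sum_const, Finset.card_range, nsmul_eq_mul]
        _ ≤ ∑ j ∈ range N, ‖v j‖ ^ ta :=
            Finset.sum_le_sum fun j _ => Real.rpow_le_rpow (by positivity) (hv_low j) hta0.le
    have h1 : (N:ℝ) * (c0/2)^ta ≤ ‖∑ j ∈ range N, v j‖ ^ ta := by rw [hV N]; exact hsum
    have h2 : ‖∑ j ∈ range N, v j‖ = (‖∑ j ∈ range N, v j‖ ^ ta) ^ ta⁻¹ :=
      (Real.rpow_rpow_inv (lp.norm_nonneg' _) hta0.ne').symm
    rw [h2]
    calc (c0/2) * (N:ℝ)^ta⁻¹ = ((N:ℝ) * (c0/2)^ta) ^ ta⁻¹ := by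
          rw [Real.mul_rpow (Nat.cast_nonneg N) (by positivity),
            Real.rpow_rpow_inv (by positivity) hta0.ne']
          ring
      _ ≤ (‖∑ j ∈ range N, v j‖ ^ ta) ^ ta⁻¹ :=
          Real.rpow_le_rpow (by positivity) h1 (by positivity)
  -- final inequalities
  have final1 : ∀ N : ℕ, (2*(N:ℝ)) ^ tb⁻¹ ≤ (‖A‖ * (2*‖B‖)) * (N:ℝ) ^ ta⁻¹ + ‖A‖ := by
    intro N
    have h1 : ‖W N‖ ≤ 2*‖B‖ * (N:ℝ)^ta⁻¹ + 1 := by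
      have h2 := norm_sub_norm_le (W N) (∑ j ∈ range N, v j)
      linarith [hVnorm_up N, hWV N]
    calc (2*(N:ℝ))^tb⁻¹ = ‖D N‖ := (hDnorm N).symm
      _ = ‖A (W N)‖ := by rw [hDA]
      _ ≤ ‖A‖ * ‖W N‖ := A.le_opNorm _
      _ ≤ ‖A‖ * (2*‖B‖*(N:ℝ)^ta⁻¹ + 1) := mul_le_mul_of_nonneg_left h1 (norm_nonneg A)
      _ = (‖A‖ * (2*‖B‖)) * (N:ℝ) ^ ta⁻¹ + ‖A‖ := by ring
  have final2 : ∀ N : ℕ, (c0/2) * (N:ℝ) ^ ta⁻¹ ≤ (‖B‖ * 2 ^ tb⁻¹) * (N:ℝ) ^ tb⁻¹ + 1 := by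
    intro N
    have h1 : (c0/2)*(N:ℝ)^ta⁻¹ - 1 ≤ ‖W N‖ := by
      have h2 := norm_sub_norm_le (∑ j ∈ range N, v j) (W N)
      rw [norm_sub_rev] at h2
      linarith [hVnorm_low N, hWV N]
    have h4 : ‖W N‖ ≤ ‖B‖ * ((2*(N:ℝ)) ^ tb⁻¹) := by
      rw [hWB N]
      calc ‖B (D N)‖ ≤ ‖B‖ * ‖D N‖ := B.le_opNorm _
        _ = ‖B‖ * ((2*(N:ℝ)) ^ tb⁻¹) := by rw [hDnorm]
    have h5 : (2*(N:ℝ))^tb⁻¹ = 2^tb⁻¹ * (N:ℝ)^tb⁻¹ :=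
      Real.mul_rpow (by norm_num) (Nat.cast_nonneg N)
    have h6 : ‖B‖ * ((2*(N:ℝ)) ^ tb⁻¹) = (‖B‖ * 2 ^ tb⁻¹) * (N:ℝ)^tb⁻¹ := by rw [h5]; ring
    linarith
  rcases lt_or_gt_of_ne htab with hlt | hlt
  · -- ta < tb, so tb⁻¹ < ta⁻¹; use final2
    have hrs : tb⁻¹ < ta⁻¹ := by
      rw [inv_lt_inv₀ htb0 hta0] at *
      · exact hlt
    exact poly_contra (by positivity) hrs (by positivity) (by positivity) zero_le_one final2
  · -- tb < ta, so ta⁻¹ < tb⁻¹; use final1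
    have hrs : ta⁻¹ < tb⁻¹ := by
      rw [inv_lt_inv₀ hta0 htb0] at *
      · exact hlt
    have final1' : ∀ N : ℕ, 1 * (N:ℝ)^tb⁻¹ ≤ (‖A‖*(2*‖B‖)) * (N:ℝ)^ta⁻¹ + ‖A‖ := by
      intro N
      have hN0 : (0:ℝ) ≤ (N:ℝ) := Nat.cast_nonneg N
      have hle : (N:ℝ)^tb⁻¹ ≤ (2*(N:ℝ))^tb⁻¹ :=
        Real.rpow_le_rpow hN0 (by linarith) (by positivity)
      linarith [final1 N]
    exact poly_contra (by positivity) hrs one_pos (by positivity) (norm_nonneg A) final1'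


end NoEaoe

end

set_option maxHeartbeats 1000000 in
/-- For `1 ≤ p ≠ q < ∞`, no bounded operators `T ∈ B(ℓᵖ)` and `S ∈ B(ℓ^q)`
are equivalent after one-sided extension: there is no Banach space `Z` and invertible
operators `E : ℓ^q ⊕ Z → ℓᵖ`, `F : ℓᵖ → ℓ^q ⊕ Z` with `T = E ⬝ diag(S, id_Z) ⬝ F`,
nor the symmetric factorization with the roles of `T` and `S` exchanged. -/
theorem no_eaoe_between_different_lp
    (p q : ℝ≥0∞) [Fact (1 ≤ p)] [Fact (1 ≤ q)] (hp : p < ⊤) (hq : q < ⊤) (hpq : p ≠ q)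
    (T : lp (fun _ : ℕ => ℂ) p →L[ℂ] lp (fun _ : ℕ => ℂ) p)
    (S : lp (fun _ : ℕ => ℂ) q →L[ℂ] lp (fun _ : ℕ => ℂ) q) :
    ¬ ((∃ (Z : Type) (_ : NormedAddCommGroup Z) (_ : NormedSpace ℂ Z) (_ : CompleteSpace Z)
        (E : (lp (fun _ : ℕ => ℂ) q × Z) ≃L[ℂ] lp (fun _ : ℕ => ℂ) p)
        (F : lp (fun _ : ℕ => ℂ) p ≃L[ℂ] (lp (fun _ : ℕ => ℂ) q × Z)),
        T = (E : (lp (fun _ : ℕ => ℂ) q × Z) →L[ℂ] lp (fun _ : ℕ => ℂ) p) ∘L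
          (S.prodMap (ContinuousLinearMap.id ℂ Z)) ∘L
            (F : lp (fun _ : ℕ => ℂ) p →L[ℂ] (lp (fun _ : ℕ => ℂ) q × Z))) ∨
      (∃ (Z : Type) (_ : NormedAddCommGroup Z) (_ : NormedSpace ℂ Z) (_ : CompleteSpace Z)
        (E : (lp (fun _ : ℕ => ℂ) p × Z) ≃L[ℂ] lp (fun _ : ℕ => ℂ) q)
        (F : lp (fun _ : ℕ => ℂ) q ≃L[ℂ] (lp (fun _ : ℕ => ℂ) p × Z)),
        S = (E : (lp (fun _ : ℕ => ℂ) p × Z) →L[ℂ] lp (fun _ : ℕ => ℂ) q) ∘L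
          (T.prodMap (ContinuousLinearMap.id ℂ Z)) ∘L
            (F : lp (fun _ : ℕ => ℂ) q →L[ℂ] (lp (fun _ : ℕ => ℂ) p × Z)))) := by
  rintro (⟨Z, _, _, _, E, F, -⟩ | ⟨Z, _, _, _, E, F, -⟩)
  · refine NoEaoe.no_factor p q hp hq hpq
      ((ContinuousLinearMap.fst ℂ (lp (fun _ : ℕ => ℂ) q) Z) ∘L
        (F : lp (fun _ : ℕ => ℂ) p →L[ℂ] (lp (fun _ : ℕ => ℂ) q × Z)))
      ((F.symm : (lp (fun _ : ℕ => ℂ) q × Z) →L[ℂ] lp (fun _ : ℕ => ℂ) p) ∘L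
        (ContinuousLinearMap.inl ℂ (lp (fun _ : ℕ => ℂ) q) Z))
      (fun x => ?_)
    simp
  · refine NoEaoe.no_factor q p hq hp hpq.symm
      ((ContinuousLinearMap.fst ℂ (lp (fun _ : ℕ => ℂ) p) Z) ∘L
        (F : lp (fun _ : ℕ => ℂ) q →L[ℂ] (lp (fun _ : ℕ => ℂ) p × Z)))
      ((F.symm : (lp (fun _ : ℕ => ℂ) p × Z) →L[ℂ] lp (fun _ : ℕ => ℂ) q) ∘L
        (ContinuousLinearMap.inl ℂ (lp (fun _ : ℕ => ℂ) p) Z))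
      (fun x => ?_)
    simp
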